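/- Let A be a noetherian commutative ring and M an A-module. Endow the set Sub(M) of submodules of M with the topology induced by the inclusion N ↦ (underlying set of N) into the power set 2^M (with the product topology). (1) If N is an isolated point of Sub(M), then N is finitely generated and M/N is artinian; in particular, if Sub(M) has an isolated point then M is minimax. (2) If every simple A-module is finite, then conversely N is an isolated point of Sub(M) if and only if N is finitely generated and M/N is artinian, and Sub(M) has an isolated point if and only if M is minimax. -/

import Mathlib

open Classical in
/-- The topology on the set of submodules of `M` induced by the inclusion
`N ↦ (indicator of N)` into the power set `2^M`, the latter carrying the product topology
(each factor `{0,1}` being discrete). -/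
noncomputable def submoduleTopology (A : Type u) [CommRing A]
    (M : Type v) [AddCommGroup M] [Module A M] :
    TopologicalSpace (Submodule A M) :=
  TopologicalSpace.induced
    (fun (N : Submodule A M) (m : M) => (decide (m ∈ N) : Bool)) inferInstance

/-- `N` is an isolated point of `Sub(M)` for the topology induced from `2^M`. -/
def IsIsolatedSubmodule (A : Type u) [CommRing A]
    (M : Type v) [AddCommGroup M] [Module A M] (N : Submodule A M) : Prop :=
  @IsOpen (Submodule A M) (submoduleTopology A M) {N}


-- ===== Auxiliary development =====

universe u v

open Submodule LinearMap

section Melkersson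

variable {A : Type u} [CommRing A] {X : Type v} [AddCommGroup X] [Module A X]

lemma fpow_apply (x : A) (n : ℕ) : ∀ y : X, ((LinearMap.lsmul A X x) ^ n) y = x ^ n • y := by
  induction n with
  | zero => intro y; simp
  | succ n ih =>
    intro y
    rw [pow_succ, Module.End.mul_apply, LinearMap.lsmul_apply, ih, pow_succ, mul_smul]

lemma art_ker_pow (x : A)
    (hker : IsArtinian A (LinearMap.ker (LinearMap.lsmul A X x))) (n : ℕ) :
    IsArtinian A (LinearMap.ker ((LinearMap.lsmul A X x) ^ n)) := by
  induction n with
  | zero =>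
    rw [pow_zero]
    have : LinearMap.ker (1 : X →ₗ[A] X) = ⊥ := LinearMap.ker_id
    rw [this]
    infer_instance
  | succ n ih =>
    set f := LinearMap.lsmul A X x
    have h₁ : LinearMap.ker f ≤ LinearMap.ker (f ^ (n+1)) := by
      intro y hy
      simp only [LinearMap.mem_ker] at *
      rw [pow_succ, Module.End.mul_apply, hy, map_zero]
    have hpq : ∀ y ∈ LinearMap.ker (f ^ (n+1)), f y ∈ LinearMap.ker (f ^ n) := by
      intro y hy
      simp only [LinearMap.mem_ker] at *
      rw [← Module.End.mul_apply, ← pow_succ]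
      exact hy
    exact isArtinian_of_range_eq_ker
      (Submodule.inclusion h₁)
      (f.restrict hpq)
      (by
        ext ⟨y, hy⟩
        simp only [Submodule.range_inclusion, Submodule.mem_comap, Submodule.coe_subtype,
          LinearMap.mem_ker]
        constructor
        · intro h
          exact Subtype.ext h
        · intro h
          exact congrArg Subtype.val h)

/-- If `x^s` kills the module and the kernel of `x` is artinian, the module is artinian. -/
lemma art_of_bounded (x : A) (s : ℕ) (hs : ∀ y : X, x ^ s • y = 0)
    (hker : IsArtinian A (LinearMap.ker (LinearMap.lsmul A X x))) : IsArtinian A X := by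
  have h := art_ker_pow x hker s
  have htop : LinearMap.ker ((LinearMap.lsmul A X x) ^ s) = ⊤ := by
    ext y; simp [LinearMap.mem_ker, fpow_apply, hs y]
  rw [htop] at h
  exact isArtinian_of_linearEquiv (Submodule.topEquiv)

/-- Melkersson's criterion, principal case. -/
lemma melkersson_single (x : A) (htor : ∀ y : X, ∃ n, x ^ n • y = 0)
    (hker : IsArtinian A (LinearMap.ker (LinearMap.lsmul A X x))) :
    IsArtinian A X := by
  set f : X →ₗ[A] X := LinearMap.lsmul A X x with hfdef
  set L : Submodule A X := LinearMap.ker f with hLdef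
  have hfy : ∀ y : X, f y = x • y := fun y => rfl
  have hfny : ∀ (n : ℕ) (y : X), (f ^ n) y = x ^ n • y := fun n y => fpow_apply x n y
  have hmaple : ∀ N : Submodule A X, Submodule.map f N ≤ N := by
    intro N y hy
    obtain ⟨z, hz, rfl⟩ := hy
    rw [hfy]
    exact N.smul_mem x hz
  have hmap0 : ∀ N : Submodule A X, Submodule.map (f ^ 0) N = N := by
    intro N; rw [pow_zero, Module.End.one_eq_id, Submodule.map_id]
  have hcomp : ∀ (m n : ℕ) (N : Submodule A X),
      Submodule.map (f ^ (m + n)) N = Submodule.map (f ^ m) (Submodule.map (f ^ n) N) := by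
    intro m n N
    rw [pow_add, Module.End.mul_eq_comp, Submodule.map_comp]
  have hmapk : ∀ (k : ℕ) (N : Submodule A X), Submodule.map (f ^ k) N ≤ N := by
    intro k
    induction k with
    | zero => intro N; rw [hmap0]
    | succ k ih =>
      intro N
      calc Submodule.map (f ^ (k + 1)) N
          = Submodule.map (f ^ k) (Submodule.map (f ^ 1) N) := by rw [← hcomp]
        _ ≤ Submodule.map (f ^ 1) N := ih _
        _ ≤ N := by rw [pow_one]; exact hmaple N
  have hdesc : ∀ (N : Submodule A X) {m n : ℕ}, m ≤ n →
      Submodule.map (f ^ n) N ≤ Submodule.map (f ^ m) N := by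
    intro N m n hmn
    obtain ⟨k, rfl⟩ := Nat.exists_eq_add_of_le hmn
    rw [hcomp]
    exact Submodule.map_mono (hmapk k N)
  -- stabilization of (map (f^n) N ⊓ L) using artinianness of L
  have hstab : ∀ N : Submodule A X, ∃ s : ℕ, ∀ n, s ≤ n →
      Submodule.map (f ^ n) N ⊓ L = Submodule.map (f ^ s) N ⊓ L := by
    intro N
    have hanti : ∀ i j : ℕ, i ≤ j →
        Submodule.map (f ^ j) N ⊓ L ≤ Submodule.map (f ^ i) N ⊓ L :=
      fun i j hij => inf_le_inf_right L (hdesc N hij)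
    let c : ℕ →o (Submodule A ↥L)ᵒᵈ :=
      ⟨fun n => Submodule.comap L.subtype (Submodule.map (f ^ n) N ⊓ L),
       fun i j hij => Submodule.comap_mono (hanti i j hij)⟩
    obtain ⟨s, hs⟩ := IsArtinian.monotone_stabilizes c
    refine ⟨s, fun n hn => ?_⟩
    have h1 : Submodule.comap L.subtype (Submodule.map (f ^ s) N ⊓ L)
        = Submodule.comap L.subtype (Submodule.map (f ^ n) N ⊓ L) := hs n hn
    have h2 : ∀ m : ℕ,
        Submodule.map L.subtype (Submodule.comap L.subtype (Submodule.map (f ^ m) N ⊓ L))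
        = Submodule.map (f ^ m) N ⊓ L := by
      intro m
      rw [Submodule.map_comap_subtype]
      exact inf_eq_right.mpr inf_le_right
    rw [← h2 n, ← h2 s, h1]
  -- the divisible part
  set dv : Submodule A X → Submodule A X :=
    fun N => ⨅ n : ℕ, Submodule.map (f ^ n) N with hdvdef
  have hdvlen : ∀ (N : Submodule A X) (n : ℕ), dv N ≤ Submodule.map (f ^ n) N :=
    fun N n => iInf_le _ n
  have hdvle : ∀ N : Submodule A X, dv N ≤ N := by
    intro N
    have := hdvlen N 0
    rwa [hmap0] at this
  have hdvmono : ∀ {N₁ N₂ : Submodule A X}, N₁ ≤ N₂ → dv N₁ ≤ dv N₂ :=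
    fun {N₁ N₂} h => le_iInf fun n => (hdvlen _ n).trans (Submodule.map_mono h)
  -- f is surjective on dv N
  have hsurj : ∀ (N : Submodule A X) (d : X), d ∈ dv N → ∃ a ∈ dv N, f a = d := by
    intro N d hd
    obtain ⟨s, hs⟩ := hstab N
    have hmem : ∀ n, d ∈ Submodule.map (f ^ n) N := fun n => hdvlen N n hd
    obtain ⟨w, hw, hfw⟩ := hmem (s + 1)
    have haS : (f ^ s) w ∈ Submodule.map (f ^ s) N := Submodule.mem_map_of_mem hw
    have hfa : f ((f ^ s) w) = d := by
      rw [← Module.End.mul_apply, ← pow_succ']; exact hfw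
    refine ⟨(f ^ s) w, Submodule.mem_iInf _ |>.mpr fun n => ?_, hfa⟩
    rcases le_or_gt n s with h | h
    · exact hdesc N h haS
    · obtain ⟨w', hw', hfw'⟩ := hmem (n + 1)
      have ha' : (f ^ n) w' ∈ Submodule.map (f ^ n) N := Submodule.mem_map_of_mem hw'
      have hfa' : f ((f ^ n) w') = d := by
        rw [← Module.End.mul_apply, ← pow_succ']; exact hfw'
      have hdiff : (f ^ s) w - (f ^ n) w' ∈ Submodule.map (f ^ s) N ⊓ L := by
        refine ⟨sub_mem haS (hdesc N h.le ha'), ?_⟩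
        show f ((f ^ s) w - (f ^ n) w') = 0
        rw [map_sub, hfa, hfa', sub_self]
      rw [← hs n h.le] at hdiff
      have := add_mem hdiff.1 ha'
      simpa using this
  have hdvdiv : ∀ N : Submodule A X, Submodule.map f (dv N) = dv N := by
    intro N
    refine le_antisymm (le_iInf fun n => ?_) ?_
    · cases n with
      | zero =>
        rw [hmap0]
        exact (Submodule.map_mono (hdvle N)).trans (hmaple N)
      | succ m =>
        calc Submodule.map f (dv N) ≤ Submodule.map f (Submodule.map (f ^ m) N) :=
              Submodule.map_mono (hdvlen N m)
          _ = Submodule.map (f ^ (m + 1)) N := by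
              rw [show m + 1 = 1 + m from Nat.add_comm m 1, hcomp, pow_one]
    · intro d hd
      obtain ⟨a, ha, hfa⟩ := hsurj N d hd
      exact ⟨a, ha, hfa⟩
  -- a divisible submodule is determined by its intersection with L
  have hdet : ∀ N₁ N₂ : Submodule A X, N₁ ≤ N₂ → Submodule.map f N₁ = N₁ →
      N₁ ⊓ L = N₂ ⊓ L → N₂ ≤ N₁ := by
    intro N₁ N₂ hle hdiv hinf
    have key : ∀ (n : ℕ) (y : X), y ∈ N₂ → x ^ n • y = 0 → y ∈ N₁ := by
      intro n
      induction n with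
      | zero =>
        intro y _ h0
        have : y = 0 := by simpa using h0
        rw [this]; exact N₁.zero_mem
      | succ n ih =>
        intro y hy hn
        have hxy : x ^ n • (x • y) = 0 := by
          rw [← mul_smul, ← pow_succ]; exact hn
        have h1 : x • y ∈ N₁ := ih (x • y) (N₂.smul_mem x hy) hxy
        rw [← hdiv] at h1
        obtain ⟨z, hz, hfz⟩ := h1
        have hsub : y - z ∈ N₂ ⊓ L := by
          refine ⟨sub_mem hy (hle hz), ?_⟩
          show f (y - z) = 0
          rw [map_sub, hfy, hfz, sub_self]
        rw [← hinf] at hsub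
        have := add_mem hsub.1 hz
        simpa using this
    intro y hy
    obtain ⟨n, hn⟩ := htor y
    exact key n y hy hn
  -- eventually map (f^s) N ≤ dv N
  have hquot : ∀ N : Submodule A X, ∃ s : ℕ, Submodule.map (f ^ s) N ≤ dv N := by
    intro N
    obtain ⟨s, hs⟩ := hstab N
    refine ⟨s, le_iInf fun n => ?_⟩
    rcases le_or_gt n s with h | h
    · exact hdesc N h
    · intro yy hyy
      obtain ⟨w, hw, rfl⟩ := hyy
      have key : ∀ (t : ℕ) (w : X), w ∈ N → x ^ t • w = 0 →
          (f ^ s) w ∈ Submodule.map (f ^ n) N := by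
        intro t
        induction t with
        | zero =>
          intro w _ h0
          have : w = 0 := by simpa using h0
          rw [this, map_zero]; exact zero_mem _
        | succ t ih =>
          intro w hw ht
          rcases le_or_gt (t + 1) s with hts | hts
          · have h1 : (f ^ (t + 1)) w = 0 := by rw [hfny]; exact ht
            obtain ⟨k, hk⟩ := Nat.exists_eq_add_of_le hts
            have hzero : (f ^ s) w = 0 := by
              rw [show s = k + (t + 1) from by omega, pow_add, Module.End.mul_apply, h1, map_zero]
            rw [hzero]; exact zero_mem _
          · have hst : s ≤ t := Nat.lt_succ_iff.mp hts
            have hu1 : (f ^ t) w ∈ Submodule.map (f ^ t) N := Submodule.mem_map_of_mem hw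
            have hu2 : (f ^ t) w ∈ L := by
              show f ((f ^ t) w) = 0
              rw [← Module.End.mul_apply, ← pow_succ', hfny]
              exact ht
            have hu3 : (f ^ t) w ∈ Submodule.map (f ^ (t + n)) N ⊓ L := by
              rw [hs (t + n) (le_trans hst (Nat.le_add_right t n))]
              rw [← hs t hst]
              exact ⟨hu1, hu2⟩
            obtain ⟨v, hv, hfv⟩ := hu3.1
            have hvN : (f ^ n) v ∈ N := hmapk n N (Submodule.mem_map_of_mem hv)
            have hw' : w - (f ^ n) v ∈ N := sub_mem hw hvN
            have ht' : x ^ t • (w - (f ^ n) v) = 0 := by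
              rw [← hfny, map_sub]
              have h2 : (f ^ t) ((f ^ n) v) = (f ^ (t + n)) v := by
                rw [← Module.End.mul_apply, ← pow_add]
              rw [h2, hfv, sub_self]
            have h3 := ih (w - (f ^ n) v) hw' ht'
            have h4 : (f ^ s) w = (f ^ s) (w - (f ^ n) v) + (f ^ n) ((f ^ s) v) := by
              have hcommv : (f ^ s) ((f ^ n) v) = (f ^ n) ((f ^ s) v) := by
                rw [← Module.End.mul_apply, ← Module.End.mul_apply, ← pow_add, ← pow_add,
                  Nat.add_comm]
              rw [map_sub, hcommv]; abel
            rw [h4]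
            have h5 : (f ^ s) v ∈ N := hmapk s N (Submodule.mem_map_of_mem hv)
            exact add_mem h3 (Submodule.mem_map_of_mem h5)
      obtain ⟨t, ht⟩ := htor w
      exact key t w hw ht
  -- final: every descending chain stabilizes
  rw [← monotone_stabilizes_iff_artinian]
  intro ch
  set N : ℕ → Submodule A X := fun i => OrderDual.ofDual (ch i) with hNdef
  have hNanti : ∀ {i j : ℕ}, i ≤ j → N j ≤ N i := fun {i j} h => ch.monotone h
  -- stabilize dv (N i) ⊓ L
  let c : ℕ →o (Submodule A ↥L)ᵒᵈ :=
    ⟨fun i => Submodule.comap L.subtype (dv (N i) ⊓ L),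
     fun i j hij => Submodule.comap_mono (inf_le_inf_right L (hdvmono (hNanti hij)))⟩
  obtain ⟨i₀, hi₀⟩ := IsArtinian.monotone_stabilizes c
  have hLband : ∀ i : ℕ,
      Submodule.map L.subtype (Submodule.comap L.subtype (dv (N i) ⊓ L)) = dv (N i) ⊓ L := by
    intro i
    rw [Submodule.map_comap_subtype]
    exact inf_eq_right.mpr inf_le_right
  have hdinf : ∀ i, i₀ ≤ i → dv (N i) ⊓ L = dv (N i₀) ⊓ L := by
    intro i hi
    have h1 : Submodule.comap L.subtype (dv (N i₀) ⊓ L)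
        = Submodule.comap L.subtype (dv (N i) ⊓ L) := hi₀ i hi
    have h2 := congrArg (Submodule.map L.subtype) h1
    rw [hLband, hLband] at h2
    exact h2.symm
  have hdeq : ∀ i, i₀ ≤ i → dv (N i) = dv (N i₀) := by
    intro i hi
    exact le_antisymm (hdvmono (hNanti hi))
      (hdet (dv (N i)) (dv (N i₀)) (hdvmono (hNanti hi)) (hdvdiv (N i)) (hdinf i hi))
  -- quotient by the divisible part
  set ι : ↥(N i₀) →ₗ[A] X := (N i₀).subtype with hiota
  set D' : Submodule A ↥(N i₀) := Submodule.comap ι (dv (N i₀)) with hD'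
  obtain ⟨s, hsle⟩ := hquot (N i₀)
  have hYtor : ∀ y : ↥(N i₀) ⧸ D', x ^ s • y = 0 := by
    intro y
    obtain ⟨w, rfl⟩ := Submodule.Quotient.mk_surjective D' y
    rw [← Submodule.Quotient.mk_smul, Submodule.Quotient.mk_eq_zero]
    show ι (x ^ s • w) ∈ dv (N i₀)
    have h1 : ι (x ^ s • w) = (f ^ s) (ι w) := by
      rw [map_smul, hfny]
    rw [h1]
    exact hsle (Submodule.mem_map_of_mem w.2)
  set LW : Submodule A ↥(N i₀) := Submodule.comap ι L with hLW
  have hLWart : IsArtinian A ↥LW := by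
    have hle : Submodule.map ι LW ≤ L := by
      rintro _ ⟨w, hw, rfl⟩; exact hw
    have : IsArtinian A ↥(Submodule.map ι LW) := isArtinian_of_le hle
    exact isArtinian_of_linearEquiv
      (Submodule.equivMapOfInjective ι (Submodule.injective_subtype _) LW).symm
  have hKY : LinearMap.ker (LinearMap.lsmul A (↥(N i₀) ⧸ D') x) = Submodule.map D'.mkQ LW := by
    ext y
    constructor
    · intro hy
      obtain ⟨w, rfl⟩ := Submodule.Quotient.mk_surjective D' y
      have hy' : x • (Submodule.Quotient.mk w : ↥(N i₀) ⧸ D') = 0 := hy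
      rw [← Submodule.Quotient.mk_smul, Submodule.Quotient.mk_eq_zero] at hy'
      have hxw : ι (x • w) ∈ dv (N i₀) := hy'
      rw [← hdvdiv (N i₀)] at hxw
      obtain ⟨e, he, hfe⟩ := hxw
      have heN : e ∈ N i₀ := hdvle _ he
      refine ⟨w - ⟨e, heN⟩, ?_, ?_⟩
      · show ι (w - ⟨e, heN⟩) ∈ L
        show f (ι w - e) = 0
        have : ι (x • w) = x • ι w := by rw [map_smul]
        rw [map_sub, hfe, this, hfy, sub_self]
      · have hez : D'.mkQ ⟨e, heN⟩ = 0 := by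
          rw [Submodule.mkQ_apply, Submodule.Quotient.mk_eq_zero]
          exact he
        rw [map_sub, hez, sub_zero, Submodule.mkQ_apply]
    · rintro ⟨w, hw, rfl⟩
      show x • D'.mkQ w = 0
      have : x • D'.mkQ w = D'.mkQ (x • w) := by rw [map_smul]
      rw [this, Submodule.mkQ_apply, Submodule.Quotient.mk_eq_zero]
      show ι (x • w) ∈ dv (N i₀)
      have h0 : ι (x • w) = 0 := by
        have : f (ι w) = 0 := hw
        rw [map_smul, ← hfy, this]
      rw [h0]
      exact zero_mem _
  have hKYart : IsArtinian A ↥(LinearMap.ker (LinearMap.lsmul A (↥(N i₀) ⧸ D') x)) := by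
    rw [hKY]
    have hrg : Submodule.map D'.mkQ LW = LinearMap.range (D'.mkQ ∘ₗ LW.subtype) := by
      rw [LinearMap.range_comp, Submodule.range_subtype]
    rw [hrg]
    exact isArtinian_range _
  have hYart : IsArtinian A (↥(N i₀) ⧸ D') := art_of_bounded x s hYtor hKYart
  -- now stabilize the original chain
  let ch' : ℕ →o (Submodule A (↥(N i₀) ⧸ D'))ᵒᵈ :=
    ⟨fun i => Submodule.map D'.mkQ (Submodule.comap ι (N (i₀ + i))),
     fun i j hij => Submodule.map_mono (Submodule.comap_mono (hNanti (Nat.add_le_add_left hij i₀)))⟩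
  obtain ⟨k, hk⟩ := IsArtinian.monotone_stabilizes ch'
  refine ⟨i₀ + k, fun m hm => ?_⟩
  have hi₀m : i₀ ≤ m := le_trans (Nat.le_add_right i₀ k) hm
  have hm' : i₀ + (m - i₀) = m := Nat.add_sub_cancel' hi₀m
  have h1 : Submodule.map D'.mkQ (Submodule.comap ι (N (i₀ + k)))
      = Submodule.map D'.mkQ (Submodule.comap ι (N m)) := by
    have h : Submodule.map D'.mkQ (Submodule.comap ι (N (i₀ + k)))
        = Submodule.map D'.mkQ (Submodule.comap ι (N (i₀ + (m - i₀)))) :=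
      hk (m - i₀) (by omega)
    rwa [hm'] at h
  have hD'le : ∀ j, i₀ ≤ j → D' ≤ Submodule.comap ι (N j) := by
    intro j hj
    have : dv (N i₀) ≤ N j := by
      rw [← hdeq j hj]; exact hdvle (N j)
    exact Submodule.comap_mono this
  have h3 : Submodule.comap ι (N (i₀ + k)) = Submodule.comap ι (N m) := by
    have e1 := congrArg (Submodule.comap D'.mkQ) h1
    rw [Submodule.comap_map_mkQ, Submodule.comap_map_mkQ,
      sup_eq_right.mpr (hD'le _ (Nat.le_add_right i₀ k)),
      sup_eq_right.mpr (hD'le m hi₀m)] at e1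
    exact e1
  have h4 : N (i₀ + k) = N m := by
    ext y
    constructor
    · intro hy
      have hy0 : y ∈ N i₀ := hNanti (Nat.le_add_right i₀ k) hy
      have hmem : (⟨y, hy0⟩ : ↥(N i₀)) ∈ Submodule.comap ι (N (i₀ + k)) := hy
      rw [h3] at hmem
      exact hmem
    · intro hy
      have hy0 : y ∈ N i₀ := hNanti hi₀m hy
      have hmem : (⟨y, hy0⟩ : ↥(N i₀)) ∈ Submodule.comap ι (N m) := hy
      rw [← h3] at hmem
      exact hmem
  exact h4

end Melkersson

section Multi

variable {A : Type u} [CommRing A]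

lemma melkersson_multi (s : Finset A) :
    ∀ (X : Type v) [AddCommGroup X] [Module A X],
      (∀ x ∈ s, ∀ y : X, ∃ n, x ^ n • y = 0) →
      IsArtinian A ↥(⨅ x ∈ s, LinearMap.ker (LinearMap.lsmul A X x)) →
      IsArtinian A X := by
  classical
  induction s using Finset.cons_induction with
  | empty =>
    intro X _ _ _ hker
    have htop : (⨅ x ∈ (∅ : Finset A), LinearMap.ker (LinearMap.lsmul A X x))
        = (⊤ : Submodule A X) := by simp
    rw [htop] at hker
    exact isArtinian_of_linearEquiv Submodule.topEquiv
  | cons x s hx ih =>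
    intro X _ _ htor hker
    have hxtor : ∀ y : X, ∃ n, x ^ n • y = 0 := htor x (Finset.mem_cons_self x s)
    set Kx : Submodule A X := LinearMap.ker (LinearMap.lsmul A X x) with hKx
    set KI : Submodule A ↥Kx := ⨅ x' ∈ s, LinearMap.ker (LinearMap.lsmul A ↥Kx x') with hKI
    have key : Submodule.map Kx.subtype KI
        = ⨅ x' ∈ Finset.cons x s hx, LinearMap.ker (LinearMap.lsmul A X x') := by
      ext z
      simp only [Submodule.mem_map, hKI, Submodule.mem_iInf, LinearMap.mem_ker,
        LinearMap.lsmul_apply, Finset.mem_cons, Submodule.coe_subtype]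
      constructor
      · rintro ⟨y, hy, rfl⟩
        intro x' hx'
        rcases hx' with rfl | hx'
        · exact y.2
        · have h1 := hy x' hx'
          have : ((x' • y : ↥Kx) : X) = ((0 : ↥Kx) : X) := congrArg Subtype.val h1
          simpa using this
      · intro hz
        have hzK : z ∈ Kx := hz x (Or.inl rfl)
        refine ⟨⟨z, hzK⟩, fun x' hx' => Subtype.ext ?_, rfl⟩
        show x' • z = 0
        exact hz x' (Or.inr hx')
    have hKIart : IsArtinian A ↥KI := by
      have h1 : IsArtinian A ↥(Submodule.map Kx.subtype KI) := by rw [key]; exact hker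
      exact isArtinian_of_linearEquiv
        (Submodule.equivMapOfInjective _ (Submodule.injective_subtype _) KI).symm
    have hKxart : IsArtinian A ↥Kx := by
      refine ih ↥Kx (fun x' hx' y => ?_) hKIart
      obtain ⟨n, hn⟩ := htor x' (Finset.mem_cons_of_mem hx') (y : X)
      exact ⟨n, Subtype.ext (by simpa using hn)⟩
    exact melkersson_single x hxtor hKxart


end Multi

section PrimeMax

variable {A : Type u} [CommRing A] [IsNoetherianRing A]
variable {Q : Type v} [AddCommGroup Q] [Module A Q]

/-- Under the covering hypothesis, any prime over the annihilator of a nonzero element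
is maximal. -/
lemma prime_over_ann_isMaximal
    (H : Finset Q) (h0 : (0 : Q) ∉ H)
    (hess : ∀ P : Submodule A Q, P ≠ ⊥ → ∃ h ∈ H, h ∈ P) :
    ∀ q : Q, q ≠ 0 → ∀ p : Ideal A, p.IsPrime → Ideal.torsionOf A Q q ≤ p → p.IsMaximal := by
  classical
  have main : ∀ J : Ideal A, ∀ q : Q, q ≠ 0 → Ideal.torsionOf A Q q = J →
      ∀ p : Ideal A, p.IsPrime → J ≤ p → p.IsMaximal := by
    intro J
    induction J using IsNoetherian.induction with
    | hgt J IH =>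
      intro q hq hJ p hp hle
      by_cases hcase : ∃ b : A, b ∉ p ∧ Ideal.torsionOf A Q q ≠ Ideal.torsionOf A Q (b • q)
      · obtain ⟨b, hbp, hne⟩ := hcase
        have hbq : b • q ≠ 0 := by
          intro hb0
          apply hbp
          apply hle
          rw [← hJ]
          rw [Ideal.mem_torsionOf_iff]
          exact hb0
        have hmono : Ideal.torsionOf A Q q ≤ Ideal.torsionOf A Q (b • q) := by
          intro a ha
          rw [Ideal.mem_torsionOf_iff] at ha ⊢
          rw [smul_comm, ha, smul_zero]
        have hgt : Ideal.torsionOf A Q (b • q) > J := by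
          rw [← hJ]
          exact lt_of_le_of_ne hmono (by rw [hJ] at hne ⊢; exact hJ ▸ hne)
        have hsub : Ideal.torsionOf A Q (b • q) ≤ p := by
          intro a ha
          rw [Ideal.mem_torsionOf_iff] at ha
          have hab : a * b ∈ Ideal.torsionOf A Q q := by
            rw [Ideal.mem_torsionOf_iff, mul_smul]
            exact ha
          rcases hp.mem_or_mem (hle (hJ ▸ hab)) with h | h
          · exact h
          · exact absurd h hbp
        exact IH _ hgt (b • q) hbq rfl p hp hsub
      · push_neg at hcase
        by_contra hpmax
        have hptop : p ≠ ⊤ := hp.ne_top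
        have hex : ∃ m : Ideal A, p < m ∧ m ≠ ⊤ := by
          by_contra hcon
          push_neg at hcon
          exact hpmax ⟨⟨hptop, fun m hm => hcon m hm⟩⟩
        obtain ⟨m, hpm, hmtop⟩ := hex
        obtain ⟨x, hxm, hxp⟩ := SetLike.exists_of_lt hpm
        -- powers of x do not kill q
        have hxq : ∀ n : ℕ, x ^ n • q ≠ 0 := by
          intro n h
          have : x ^ n ∈ p := hle (hJ ▸ (Ideal.mem_torsionOf_iff _ _ |>.mpr h))
          exact hxp (hp.mem_of_pow_mem n this)
        -- descending chain of spans
        have hdesc : ∀ {n m : ℕ}, n ≤ m →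
            Submodule.span A {x ^ m • q} ≤ Submodule.span A {x ^ n • q} := by
          intro n m hnm
          rw [Submodule.span_le, Set.singleton_subset_iff]
          have : x ^ m • q = x ^ (m - n) • (x ^ n • q) := by
            rw [← mul_smul, ← pow_add, Nat.sub_add_cancel hnm]
          rw [this]
          exact Submodule.smul_mem _ _ (Submodule.mem_span_singleton_self _)
        have hpigeon : ∃ h ∈ H, ∀ n : ℕ, h ∈ Submodule.span A {x ^ n • q} := by
          by_contra hcon
          push_neg at hcon
          choose! nf hnf using hcon
          set B := H.sup nf with hB
          obtain ⟨h, hH, hmem⟩ := hess (Submodule.span A {x ^ B • q})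
            (by rw [Ne, Submodule.span_singleton_eq_bot]; exact hxq B)
          exact hnf h hH (hdesc (Finset.le_sup hH) hmem)
        obtain ⟨h, hH, hmem⟩ := hpigeon
        have hh0 : h ≠ 0 := fun h' => h0 (h' ▸ hH)
        -- move to the span of q, a finite module
        have hqC : q ∈ Submodule.span A {q} := Submodule.mem_span_singleton_self q
        have hhC : h ∈ Submodule.span A {q} := by
          have := hmem 0
          simpa using this
        haveI : Module.Finite A ↥(Submodule.span A {q}) :=
          Module.Finite.span_of_finite A (Set.finite_singleton q)
        set hC : ↥(Submodule.span A {q}) := ⟨h, hhC⟩ with hhCdef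
        have hiInf : ∀ n : ℕ, hC ∈ (Ideal.span {x}) ^ n • (⊤ : Submodule A ↥(Submodule.span A {q})) := by
          intro n
          obtain ⟨a, ha⟩ := Submodule.mem_span_singleton.mp (hmem n)
          have : hC = a • (x ^ n • (⟨q, hqC⟩ : ↥(Submodule.span A {q}))) := by
            apply Subtype.ext
            simp only [SetLike.val_smul]
            exact ha.symm
          rw [this]
          refine Submodule.smul_mem _ a ?_
          refine Submodule.smul_mem_smul ?_ trivial
          rw [Ideal.span_singleton_pow]
          exact Ideal.subset_span rfl
        -- transport to `A ⧸ torsionOf q`, which lives in the same universe as `A`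
        set e := Ideal.quotTorsionOfEquivSpanSingleton A Q q with he
        have hiInf' : e.symm hC ∈
            (⨅ i : ℕ, (Ideal.span {x}) ^ i • (⊤ : Submodule A (A ⧸ Ideal.torsionOf A Q q))) := by
          rw [Submodule.mem_iInf]
          intro n
          have h2 : Submodule.map (e.symm : ↥(Submodule.span A {q}) →ₗ[A] A ⧸ Ideal.torsionOf A Q q)
              ((Ideal.span {x}) ^ n • (⊤ : Submodule A ↥(Submodule.span A {q})))
              = (Ideal.span {x}) ^ n • (⊤ : Submodule A (A ⧸ Ideal.torsionOf A Q q)) := by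
            rw [Submodule.map_smul'', Submodule.map_top, LinearEquiv.range]
          rw [← h2]
          exact ⟨hC, hiInf n, rfl⟩
        obtain ⟨r, hr⟩ :=
          (Ideal.mem_iInf_smul_pow_eq_bot_iff (Ideal.span {x}) (e.symm hC)).mp hiInf'
        obtain ⟨b, hb⟩ := Ideal.mem_span_singleton'.mp r.2
        have hrC : (r : A) • hC = hC := by
          have := congrArg e hr
          rwa [map_smul, LinearEquiv.apply_symm_apply] at this
        have hrh : (b * x) • h = h := by
          have := congrArg Subtype.val hrC
          simpa [hb] using this
        -- h = (a*x) • q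
        obtain ⟨a, ha⟩ := Submodule.mem_span_singleton.mp (hmem 1)
        have hax : h = (a * x) • q := by rw [mul_smul]; rw [← ha]; rw [pow_one]
        -- (1 - b*x) ∉ p
        have h1bx : (1 - b * x) ∉ p := by
          intro hin
          apply hmtop
          rw [Ideal.eq_top_iff_one]
          have : (1 : A) = (1 - b * x) + b * x := by ring
          rw [this]
          exact Ideal.add_mem m (le_of_lt hpm hin) (Ideal.mul_mem_left m b hxm)
        -- (a*x) kills (1-b*x) • q
        have hkill : (a * x) • ((1 - b * x) • q) = 0 := by
          rw [smul_smul, mul_comm, ← smul_smul, ← hax, sub_smul, one_smul, hrh, sub_self]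
        have hsat := hcase (1 - b * x) h1bx
        have : (a * x) ∈ Ideal.torsionOf A Q q := by
          rw [hsat]
          rw [Ideal.mem_torsionOf_iff]
          exact hkill
        rw [Ideal.mem_torsionOf_iff] at this
        exact hh0 (by rw [hax, this])
  intro q hq p hp hle
  exact main (Ideal.torsionOf A Q q) q hq rfl p hp hle

end PrimeMax

section Assemble

variable {A : Type u} [CommRing A]

/-- Transfer artinianness of `A ⧸ J` as an `A`-module to artinianness as a ring. -/
lemma isArtinianRing_of_isArtinian_module (J : Ideal A) (h : IsArtinian A (A ⧸ J)) :
    IsArtinianRing (A ⧸ J) := by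
  rw [isArtinianRing_iff, isArtinian_iff]
  rw [isArtinian_iff] at h
  exact (Submodule.restrictScalarsEmbedding A (A ⧸ J) (A ⧸ J)).ltEmbedding.wellFounded h

lemma isSimpleModule_isArtinian {R : Type*} [Ring R] {M : Type*} [AddCommGroup M] [Module R M]
    [IsSimpleModule R M] : IsArtinian R M := by
  rw [isArtinian_iff]
  have hbot : Acc (· < ·) (⊥ : Submodule R M) :=
    Acc.intro _ (fun b hb => absurd hb (not_lt_bot))
  constructor
  intro a
  rcases eq_bot_or_eq_top a with rfl | rfl
  · exact hbot
  · exact Acc.intro _ (fun b hb => by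
      rcases eq_bot_or_eq_top b with rfl | rfl
      · exact hbot
      · exact absurd hb (lt_irrefl ⊤))

variable [IsNoetherianRing A]

/-- A finitely generated module killed by an ideal all of whose primes are maximal
is artinian. -/
lemma artinian_of_fg_kill (J : Ideal A)
    (hJ : ∀ p : Ideal A, p.IsPrime → J ≤ p → p.IsMaximal)
    (X : Type v) [AddCommGroup X] [Module A X] [Module.Finite A X]
    (hkill : ∀ a ∈ J, ∀ x : X, a • x = 0) : IsArtinian A X := by
  haveI : IsNoetherian A X := isNoetherian_of_isNoetherianRing_of_finite A X
  obtain ⟨X₀, hX₀mem, hX₀max⟩ := set_has_maximal_iff_noetherian.mpr ‹IsNoetherian A X›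
    {P : Submodule A X | IsArtinian A ↥P}
    ⟨⊥, show IsArtinian A ↥(⊥ : Submodule A X) from inferInstance⟩
  by_cases htop : X₀ = ⊤
  · rw [htop] at hX₀mem
    haveI : IsArtinian A ↥(⊤ : Submodule A X) := hX₀mem
    exact isArtinian_of_linearEquiv Submodule.topEquiv
  exfalso
  haveI : Nontrivial (X ⧸ X₀) :=
    Submodule.Quotient.nontrivial_iff.mpr htop
  obtain ⟨p, hp⟩ := associatedPrimes.nonempty A (X ⧸ X₀)
  obtain ⟨hprime, y, hy⟩ := isAssociatedPrime_iff.mp hp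
  have hJp : J ≤ p := by
    intro a ha
    rw [hy, Submodule.mem_colon_singleton, Submodule.mem_bot]
    obtain ⟨w, rfl⟩ := Submodule.Quotient.mk_surjective X₀ y
    rw [← Submodule.Quotient.mk_smul, hkill a ha w]
    rfl
  have hpm : p.IsMaximal := hJ p hprime hJp
  have htors : Ideal.torsionOf A (X ⧸ X₀) y = p := by
    rw [hy]
    ext a
    rw [Ideal.mem_torsionOf_iff, Submodule.mem_colon_singleton, Submodule.mem_bot]
  haveI hart_p : IsArtinian A (A ⧸ p) := by
    haveI : IsSimpleModule A (A ⧸ p) := isSimpleModule_iff_isCoatom.mpr hpm.out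
    exact isSimpleModule_isArtinian
  have hart_span : IsArtinian A ↥(Submodule.span A {y}) := by
    haveI : IsArtinian A (A ⧸ Ideal.torsionOf A (X ⧸ X₀) y) := by rw [htors]; exact hart_p
    exact isArtinian_of_linearEquiv (Ideal.quotTorsionOfEquivSpanSingleton A (X ⧸ X₀) y)
  set Y : Submodule A X := Submodule.comap X₀.mkQ (Submodule.span A {y}) with hY
  have hX₀Y : X₀ ≤ Y := by
    intro w hw
    show X₀.mkQ w ∈ Submodule.span A {y}
    have : X₀.mkQ w = 0 := by
      rw [Submodule.mkQ_apply, Submodule.Quotient.mk_eq_zero]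
      exact hw
    rw [this]; exact zero_mem _
  have hmapY : ∀ w ∈ Y, X₀.mkQ w ∈ Submodule.span A {y} := fun w hw => hw
  haveI hYart : IsArtinian A ↥Y := by
    haveI : IsArtinian A ↥X₀ := hX₀mem
    haveI := hart_span
    exact isArtinian_of_range_eq_ker
      (Submodule.inclusion hX₀Y)
      (X₀.mkQ.restrict hmapY)
      (by
        ext ⟨w, hw⟩
        simp only [Submodule.range_inclusion, Submodule.mem_comap, Submodule.coe_subtype,
          LinearMap.mem_ker]
        constructor
        · intro hmem
          apply Subtype.ext
          show X₀.mkQ w = 0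
          rw [Submodule.mkQ_apply, Submodule.Quotient.mk_eq_zero]
          exact hmem
        · intro hmem
          have : X₀.mkQ w = 0 := congrArg Subtype.val hmem
          rwa [Submodule.mkQ_apply, Submodule.Quotient.mk_eq_zero] at this)
  have hy0 : y ≠ 0 := by
    intro h0
    apply hprime.ne_top
    rw [hy, h0]
    simp [Submodule.span_zero_singleton, Submodule.annihilator_bot]
  obtain ⟨w, hw⟩ := Submodule.Quotient.mk_surjective X₀ y
  have hwY : w ∈ Y := by
    show X₀.mkQ w ∈ Submodule.span A {y}
    rw [Submodule.mkQ_apply, hw]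
    exact Submodule.mem_span_singleton_self y
  have hwX₀ : w ∉ X₀ := by
    intro hmem
    apply hy0
    rw [← hw]
    exact (Submodule.Quotient.mk_eq_zero X₀).mpr hmem
  exact hX₀max Y hYart (lt_of_le_of_ne hX₀Y (fun h => hwX₀ (h ▸ hwY)))

/-- Key step: if a finite set of nonzero elements meets every nonzero submodule,
the module is artinian. -/
lemma artinian_of_finite_cover
    (Q : Type v) [AddCommGroup Q] [Module A Q]
    (H : Finset Q) (h0 : (0 : Q) ∉ H)
    (hess : ∀ P : Submodule A Q, P ≠ ⊥ → ∃ h ∈ H, h ∈ P) :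
    IsArtinian A Q := by
  classical
  set I : Ideal A := H.inf (fun h => Ideal.torsionOf A Q h) with hI
  have hJ : ∀ p : Ideal A, p.IsPrime → I ≤ p → p.IsMaximal := by
    intro p hp hle
    obtain ⟨h, hh, hhle⟩ := (Ideal.IsPrime.inf_le' hp).mp hle
    exact prime_over_ann_isMaximal H h0 hess h (fun h' => h0 (h' ▸ hh)) p hp hhle
  set Jr : Ideal A := I.radical with hJr
  have hIJr : I ≤ Jr := Ideal.le_radical
  have hJr_primes : ∀ p : Ideal A, p.IsPrime → Jr ≤ p → p.IsMaximal := fun p hp hle =>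
    hJ p hp (hIJr.trans hle)
  obtain ⟨nrad, hnrad⟩ := Ideal.exists_radical_pow_le_of_fg I (IsNoetherian.noetherian _)
  haveI hartmod : IsArtinian A (A ⧸ Jr) := by
    refine artinian_of_fg_kill Jr hJr_primes (A ⧸ Jr) ?_
    intro a ha x
    obtain ⟨b, rfl⟩ := Submodule.Quotient.mk_surjective Jr x
    rw [← Submodule.Quotient.mk_smul, Submodule.Quotient.mk_eq_zero]
    rw [smul_eq_mul]
    exact Ideal.mul_mem_right b Jr ha
  haveI hartring : IsArtinianRing (A ⧸ Jr) := isArtinianRing_of_isArtinian_module Jr hartmod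
  haveI hred : IsReduced (A ⧸ Jr) :=
    (Ideal.isRadical_iff_quotient_reduced I.radical).mp (Ideal.radical_isRadical I)
  haveI hss : IsSemisimpleRing (A ⧸ Jr) := IsArtinianRing.isSemisimpleRing_of_isReduced (A ⧸ Jr)
  set T : Submodule A Q := Submodule.torsionBySet A Q ↑Jr with hT
  have hTfg : Submodule.span A {t : ↥T | (t : Q) ∈ H} = ⊤ := by
    obtain ⟨T'', hc⟩ := exists_isCompl (Submodule.span (A ⧸ Jr) {t : ↥T | (t : Q) ∈ H})
    have hT''bot : T'' = ⊥ := by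
      by_contra h''
      obtain ⟨t'', ht''T, ht''0⟩ := Submodule.exists_mem_ne_zero_of_ne_bot h''
      have hcoe0 : (t'' : Q) ≠ 0 := fun hh => ht''0 (Subtype.ext hh)
      obtain ⟨h, hH, hmem⟩ := hess (Submodule.span A {(t'' : Q)})
        (by rw [Ne, Submodule.span_singleton_eq_bot]; exact hcoe0)
      obtain ⟨a, ha⟩ := Submodule.mem_span_singleton.mp hmem
      have hhT : h ∈ T := by rw [← ha]; exact T.smul_mem a t''.2
      have h1 : (⟨h, hhT⟩ : ↥T) = (Ideal.Quotient.mk Jr a) • t'' := by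
        apply Subtype.ext
        rw [Submodule.torsionBySet.mk_smul]
        exact ha.symm
      have h2 : (⟨h, hhT⟩ : ↥T) ∈ T'' := by rw [h1]; exact T''.smul_mem _ ht''T
      have h3 : (⟨h, hhT⟩ : ↥T) ∈ Submodule.span (A ⧸ Jr) {t : ↥T | (t : Q) ∈ H} :=
        Submodule.subset_span hH
      have h4 : (⟨h, hhT⟩ : ↥T) = 0 := by
        rw [← Submodule.mem_bot (A ⧸ Jr), ← hc.inf_eq_bot]
        exact ⟨h3, h2⟩
      have h5 : h = 0 := congrArg Subtype.val h4
      exact h0 (h5 ▸ hH)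
    have hTtop : Submodule.span (A ⧸ Jr) {t : ↥T | (t : Q) ∈ H} = ⊤ := by
      have := hc.sup_eq_top
      rwa [hT''bot, sup_bot_eq] at this
    rw [eq_top_iff]
    intro t _
    have ht : t ∈ Submodule.span (A ⧸ Jr) {t : ↥T | (t : Q) ∈ H} := by rw [hTtop]; trivial
    refine Submodule.span_induction (fun z hz => Submodule.subset_span hz) (zero_mem _)
      (fun z w _ _ hz hw => add_mem hz hw) ?_ ht
    intro c z _ hz
    obtain ⟨a, rfl⟩ := Ideal.Quotient.mk_surjective c
    rw [Submodule.torsionBySet.mk_smul]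
    exact Submodule.smul_mem _ a hz
  haveI hTfin : Module.Finite A ↥T := by
    refine ⟨Submodule.fg_def.mpr ⟨{t : ↥T | (t : Q) ∈ H}, ?_, hTfg⟩⟩
    have heq : {t : ↥T | (t : Q) ∈ H} = (Subtype.val : ↥T → Q) ⁻¹' ↑H := rfl
    rw [heq]
    exact Set.Finite.preimage (Set.injOn_of_injective Subtype.val_injective) H.finite_toSet
  haveI hTart : IsArtinian A ↥T := by
    refine artinian_of_fg_kill Jr hJr_primes ↥T ?_
    intro a ha t
    apply Subtype.ext
    have := (Submodule.mem_torsionBySet_iff _ _).mp t.2 ⟨a, ha⟩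
    simpa using this
  set L : Submodule A Q := Submodule.torsionBySet A Q ↑I with hL
  have hTL : T ≤ L := by
    intro t ht
    rw [Submodule.mem_torsionBySet_iff] at ht ⊢
    intro a
    exact ht ⟨a, hIJr a.2⟩
  obtain ⟨sJr, hsJr⟩ := (IsNoetherian.noetherian Jr : Jr.FG)
  have hLart : IsArtinian A ↥L := by
    refine melkersson_multi sJr ↥L (fun x hx y => ?_) ?_
    · refine ⟨nrad, Subtype.ext ?_⟩
      have hxJr : x ∈ Jr := by rw [← hsJr]; exact Submodule.subset_span hx
      have hxn : x ^ nrad ∈ I := hnrad (Ideal.pow_mem_pow hxJr nrad)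
      have := (Submodule.mem_torsionBySet_iff _ _).mp y.2 ⟨x ^ nrad, hxn⟩
      simpa using this
    · have hmap : Submodule.map L.subtype
          (⨅ x ∈ sJr, LinearMap.ker (LinearMap.lsmul A ↥L x)) = T := by
        ext z
        simp only [Submodule.mem_map, Submodule.mem_iInf, LinearMap.mem_ker,
          LinearMap.lsmul_apply, Submodule.coe_subtype]
        constructor
        · rintro ⟨y, hy, rfl⟩
          rw [Submodule.mem_torsionBySet_iff]
          have hall : ∀ a ∈ Submodule.span A (↑sJr : Set A), a • (y : Q) = 0 := by
            intro a haJr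
            refine Submodule.span_induction (fun x hx => ?_) (by simp)
              (fun a b _ _ h1 h2 => by rw [add_smul, h1, h2, add_zero])
              (fun c a _ h1 => by rw [smul_eq_mul, mul_smul, h1, smul_zero]) haJr
            have h2 := hy x hx
            have h3 : ((x • y : ↥L) : Q) = 0 := by rw [h2]; rfl
            simpa using h3
          rintro ⟨a, ha⟩
          exact hall a (by rw [hsJr]; exact ha)
        · intro hz
          have hzL : z ∈ L := hTL hz
          refine ⟨⟨z, hzL⟩, fun x hx => Subtype.ext ?_, rfl⟩
          show x • z = 0
          have hxJr : x ∈ Jr := by rw [← hsJr]; exact Submodule.subset_span hx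
          exact (Submodule.mem_torsionBySet_iff _ _).mp hz ⟨x, hxJr⟩
      have : IsArtinian A ↥(Submodule.map L.subtype
          (⨅ x ∈ sJr, LinearMap.ker (LinearMap.lsmul A ↥L x))) := by
        rw [hmap]; exact hTart
      exact isArtinian_of_linearEquiv
        (Submodule.equivMapOfInjective _ (Submodule.injective_subtype _) _).symm
  -- every element of Q is killed by a power of I
  have htorI : ∀ q : Q, ∃ n : ℕ, ∀ a ∈ I ^ n, a • q = 0 := by
    intro q
    by_cases hbot : ∃ n : ℕ, I ^ n • (Submodule.span A {q}) = ⊥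
    · obtain ⟨n, hn⟩ := hbot
      refine ⟨n, fun a ha => ?_⟩
      have : a • q ∈ I ^ n • (Submodule.span A {q}) :=
        Submodule.smul_mem_smul ha (Submodule.mem_span_singleton_self q)
      rw [hn] at this
      simpa using this
    · exfalso
      push_neg at hbot
      have hdesc : ∀ {n m : ℕ}, n ≤ m →
          I ^ m • (Submodule.span A {q}) ≤ I ^ n • (Submodule.span A {q}) :=
        fun {n m} hnm => Submodule.smul_mono_left (Ideal.pow_le_pow_right hnm)
      have hpigeon : ∃ h ∈ H, ∀ n : ℕ, h ∈ I ^ n • (Submodule.span A {q}) := by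
        by_contra hcon
        push_neg at hcon
        choose! nf hnf using hcon
        obtain ⟨h, hH, hmem⟩ := hess (I ^ (H.sup nf) • (Submodule.span A {q})) (hbot _)
        exact hnf h hH (hdesc (Finset.le_sup hH) hmem)
      obtain ⟨h, hH, hmem⟩ := hpigeon
      have hh0 : h ≠ 0 := fun h' => h0 (h' ▸ hH)
      have hhC : h ∈ Submodule.span A {q} := by
        have := hmem 0
        rwa [pow_zero, Ideal.one_eq_top, Submodule.top_smul] at this
      set e := Ideal.quotTorsionOfEquivSpanSingleton A Q q with he
      have hiInf' : e.symm ⟨h, hhC⟩ ∈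
          (⨅ i : ℕ, I ^ i • (⊤ : Submodule A (A ⧸ Ideal.torsionOf A Q q))) := by
        rw [Submodule.mem_iInf]
        intro n
        have hmapn : Submodule.map (Submodule.span A {q}).subtype
            (I ^ n • (⊤ : Submodule A ↥(Submodule.span A {q})))
            = I ^ n • (Submodule.span A {q}) := by
          rw [Submodule.map_smul'', Submodule.map_top, Submodule.range_subtype]
        have hsub : (⟨h, hhC⟩ : ↥(Submodule.span A {q})) ∈
            I ^ n • (⊤ : Submodule A ↥(Submodule.span A {q})) := by
          have hmm : h ∈ Submodule.map (Submodule.span A {q}).subtype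
              (I ^ n • (⊤ : Submodule A ↥(Submodule.span A {q}))) := by
            rw [hmapn]; exact hmem n
          obtain ⟨y, hy, hyeq⟩ := hmm
          have : y = ⟨h, hhC⟩ := Subtype.ext hyeq
          rwa [← this]
        have h2 : Submodule.map
            (e.symm : ↥(Submodule.span A {q}) →ₗ[A] A ⧸ Ideal.torsionOf A Q q)
            (I ^ n • (⊤ : Submodule A ↥(Submodule.span A {q})))
            = I ^ n • (⊤ : Submodule A (A ⧸ Ideal.torsionOf A Q q)) := by
          rw [Submodule.map_smul'', Submodule.map_top, LinearEquiv.range]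
        rw [← h2]
        exact ⟨_, hsub, rfl⟩
      obtain ⟨r, hr⟩ := (Ideal.mem_iInf_smul_pow_eq_bot_iff I _).mp hiInf'
      have hrI : (r : A) ∈ Ideal.torsionOf A Q h := by
        have hle : I ≤ Ideal.torsionOf A Q h := Finset.inf_le hH
        exact hle r.2
      rw [Ideal.mem_torsionOf_iff] at hrI
      have hrh : (r : A) • h = h := by
        have h3 := congrArg e hr
        rw [map_smul, LinearEquiv.apply_symm_apply] at h3
        have h4 := congrArg Subtype.val h3
        simpa using h4
      exact hh0 (by rw [← hrh, hrI])
  obtain ⟨sI, hsI⟩ := (IsNoetherian.noetherian I : I.FG)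
  refine melkersson_multi sI Q (fun x hx y => ?_) ?_
  · obtain ⟨n, hn⟩ := htorI y
    refine ⟨n, hn _ ?_⟩
    exact Ideal.pow_mem_pow (by rw [← hsI]; exact Submodule.subset_span hx) n
  · have hker : (⨅ x ∈ sI, LinearMap.ker (LinearMap.lsmul A Q x)) = L := by
      ext z
      simp only [Submodule.mem_iInf, LinearMap.mem_ker, LinearMap.lsmul_apply]
      constructor
      · intro hz
        rw [Submodule.mem_torsionBySet_iff]
        have hall : ∀ a ∈ Submodule.span A (↑sI : Set A), a • z = 0 := by
          intro a haI
          refine Submodule.span_induction (fun x hx => hz x hx) (by simp)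
            (fun a b _ _ h1 h2 => by rw [add_smul, h1, h2, add_zero])
            (fun c a _ h1 => by rw [smul_eq_mul, mul_smul, h1, smul_zero]) haI
        rintro ⟨a, ha⟩
        exact hall a (by rw [hsI]; exact ha)
      · intro hz x hx
        exact (Submodule.mem_torsionBySet_iff _ _).mp hz
          ⟨x, by rw [← hsI]; exact Submodule.subset_span hx⟩
    rw [hker]
    exact hLart


end Assemble

section Essential

variable (A : Type u) [CommRing A] {Q : Type v} [AddCommGroup Q] [Module A Q]

/-- In an artinian module all of whose simple subquotients are finite, there is a finite
submodule meeting every nonzero submodule. -/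
lemma exists_finite_essential [IsArtinian A Q]
    (hfin : ∀ (S : Type u) [AddCommGroup S] [Module A S], IsSimpleModule A S → Finite S) :
    ∃ T : Submodule A Q, Finite ↥T ∧ ∀ V : Submodule A Q, V ≠ ⊥ → V ⊓ T ≠ ⊥ := by
  classical
  -- strengthen to relative statement and use artinian induction
  suffices h : ∀ P : Submodule A Q, ∃ T : Submodule A Q, T ≤ P ∧ Finite ↥T ∧
      ∀ V : Submodule A Q, V ≤ P → V ≠ ⊥ → V ⊓ T ≠ ⊥ by
    obtain ⟨T, _, hTfin, hTess⟩ := h ⊤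
    exact ⟨T, hTfin, fun V hV => hTess V le_top hV⟩
  intro P
  induction P using IsArtinian.induction with
  | _ P IH =>
  by_cases hP : P = ⊥
  · refine ⟨⊥, bot_le, inferInstance, fun V hV hV0 => ?_⟩
    exact absurd (le_bot_iff.mp (hP ▸ hV)) hV0
  -- a minimal nonzero submodule of P
  obtain ⟨W, ⟨hWP, hW0⟩, hWmin⟩ := IsArtinian.set_has_minimal
    {V : Submodule A Q | V ≤ P ∧ V ≠ ⊥} ⟨P, le_refl P, hP⟩
  -- W is simple and finite
  obtain ⟨w, hwW, hw0⟩ := Submodule.exists_mem_ne_zero_of_ne_bot hW0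
  have hspan : Submodule.span A {w} = W := by
    have hle : Submodule.span A {w} ≤ W := by
      rw [Submodule.span_le, Set.singleton_subset_iff]; exact hwW
    by_contra hne
    exact hWmin (Submodule.span A {w})
      ⟨hle.trans hWP, by rw [Ne, Submodule.span_singleton_eq_bot]; exact hw0⟩
      (lt_of_le_of_ne hle hne)
  haveI hWsimple : IsSimpleModule A ↥W := by
    rw [isSimpleModule_iff_isAtom]
    refine ⟨hW0, fun b hb => ?_⟩
    by_contra hb0
    exact hWmin b ⟨hb.le.trans hWP, hb0⟩ hb
  haveI hWfin : Finite ↥W := by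
    haveI h1 : IsSimpleModule A ↥(Submodule.span A {w}) := by rw [hspan]; exact hWsimple
    haveI h2 : IsSimpleModule A (A ⧸ Ideal.torsionOf A Q w) :=
      IsSimpleModule.congr (Ideal.quotTorsionOfEquivSpanSingleton A Q w)
    haveI h3 : Finite (A ⧸ Ideal.torsionOf A Q w) := hfin _ h2
    have e := (Ideal.quotTorsionOfEquivSpanSingleton A Q w).toEquiv
    haveI : Finite ↥(Submodule.span A {w}) := Finite.of_equiv _ e
    rw [← hspan]
    infer_instance
  -- a maximal W-disjoint submodule of P, by Zorn
  obtain ⟨C, hCmem, hCmax⟩ := zorn_le₀ {C : Submodule A Q | C ≤ P ∧ C ⊓ W = ⊥} (by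
    intro c hcs hchain
    rcases Set.eq_empty_or_nonempty c with rfl | hne
    · exact ⟨⊥, ⟨bot_le, bot_inf_eq W⟩, fun z hz => absurd hz (Set.notMem_empty z)⟩
    refine ⟨sSup c, ⟨sSup_le fun z hz => (hcs hz).1, ?_⟩, fun z hz => le_sSup hz⟩
    rw [eq_bot_iff]
    intro z hz
    obtain ⟨hz1, hz2⟩ := hz
    obtain ⟨V, hVc, hzV⟩ := (Submodule.mem_sSup_of_directed hne hchain.directedOn).mp hz1
    have : z ∈ V ⊓ W := ⟨hzV, hz2⟩
    rw [(hcs hVc).2] at this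
    exact this)
  obtain ⟨hCP, hCW⟩ := hCmem
  have hCltP : C < P := by
    refine lt_of_le_of_ne hCP fun h => ?_
    have : W ⊓ C = W := inf_eq_left.mpr (h ▸ hWP)
    rw [inf_comm] at this
    rw [this] at hCW
    exact hW0 hCW
  obtain ⟨TC, hTCC, hTCfin, hTCess⟩ := IH C hCltP
  refine ⟨W ⊔ TC, sup_le hWP (hTCC.trans hCP), ?_, ?_⟩
  · -- finiteness of the sum
    have hsurj : Function.Surjective (fun p : ↥W × ↥TC =>
        (⟨(p.1 : Q) + (p.2 : Q), Submodule.add_mem _ (Submodule.mem_sup_left p.1.2)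
          (Submodule.mem_sup_right p.2.2)⟩ : ↥(W ⊔ TC))) := by
      rintro ⟨z, hz⟩
      obtain ⟨a, ha, b, hb, rfl⟩ := Submodule.mem_sup.mp hz
      exact ⟨(⟨a, ha⟩, ⟨b, hb⟩), rfl⟩
    exact Finite.of_surjective _ hsurj
  -- essentiality
  intro V hVP hV0
  rw [Submodule.ne_bot_iff]
  by_cases hVC : V ⊓ C = ⊥
  · -- first get a nonzero element of V ⊓ (W ⊔ C)
    have hCV : (C ⊔ V) ⊓ W ≠ ⊥ := by
      intro hcon
      have hmem' : C ⊔ V ∈ {C : Submodule A Q | C ≤ P ∧ C ⊓ W = ⊥} := ⟨sup_le hCP hVP, hcon⟩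
      have hle' := hCmax hmem' le_sup_left
      have hVC' : V ≤ C := le_trans le_sup_right hle'
      apply hV0
      rw [← hVC]
      exact (inf_eq_left.mpr hVC').symm
    obtain ⟨w', hw'mem, hw'0⟩ := Submodule.exists_mem_ne_zero_of_ne_bot hCV
    obtain ⟨hw'CV, hw'W⟩ := hw'mem
    obtain ⟨c, hc, v, hv, hcv⟩ := Submodule.mem_sup.mp hw'CV
    have hv0 : v ≠ 0 := by
      rintro rfl
      rw [add_zero] at hcv
      apply hw'0
      have : w' ∈ C ⊓ W := ⟨hcv ▸ hc, hw'W⟩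
      rw [hCW] at this
      simpa using this
    have hvV' : v ∈ (W ⊔ C) ⊓ V := by
      refine ⟨?_, hv⟩
      have : v = w' - c := by rw [← hcv]; abel
      rw [this]
      exact Submodule.sub_mem _ (Submodule.mem_sup_left hw'W) (Submodule.mem_sup_right hc)
    -- the "C-components" of V' = (W ⊔ C) ⊓ V
    let VC : Submodule A Q :=
      { carrier := {q | q ∈ C ∧ ∃ w'' ∈ W, w'' + q ∈ (W ⊔ C) ⊓ V},
        add_mem' := by
          rintro q1 q2 ⟨h1C, w1, hw1, hv1⟩ ⟨h2C, w2, hw2, hv2⟩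
          refine ⟨C.add_mem h1C h2C, w1 + w2, W.add_mem hw1 hw2, ?_⟩
          have heq : (w1 + w2) + (q1 + q2) = (w1 + q1) + (w2 + q2) := by abel
          rw [heq]
          exact Submodule.add_mem _ hv1 hv2
        zero_mem' := by
          refine ⟨C.zero_mem, 0, W.zero_mem, ?_⟩
          simpa using Submodule.zero_mem ((W ⊔ C) ⊓ V)
        smul_mem' := by
          rintro a q ⟨hqC, w'', hw'', hv''⟩
          refine ⟨C.smul_mem a hqC, a • w'', W.smul_mem a hw'', ?_⟩
          rw [← smul_add]
          exact Submodule.smul_mem _ a hv'' }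
    by_cases hVCbot : VC = ⊥
    · -- then v ∈ W
      have hvW : v ∈ W := by
        obtain ⟨w₁, hw₁, c₁, hc₁, hcv₁⟩ := Submodule.mem_sup.mp hvV'.1
        have hc₁VC : c₁ ∈ VC := ⟨hc₁, w₁, hw₁, by rw [hcv₁]; exact hvV'⟩
        rw [hVCbot] at hc₁VC
        have : c₁ = 0 := by simpa using hc₁VC
        rw [← hcv₁, this, add_zero]
        exact hw₁
      exact ⟨v, ⟨hv, Submodule.mem_sup_left hvW⟩, hv0⟩
    · -- VC is a nonzero submodule of C, meets TC
      have hVCle : VC ≤ C := fun q hq => hq.1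
      have h1 : VC ⊓ TC ≠ ⊥ := hTCess VC hVCle hVCbot
      obtain ⟨c₀, ⟨hc₀VC, hc₀TC⟩, hc₀0⟩ := Submodule.exists_mem_ne_zero_of_ne_bot h1
      obtain ⟨hc₀C, w₀, hw₀, hwv₀⟩ := hc₀VC
      refine ⟨w₀ + c₀, ⟨hwv₀.2, Submodule.add_mem _ (Submodule.mem_sup_left hw₀)
        (Submodule.mem_sup_right hc₀TC)⟩, ?_⟩
      intro hzero
      apply hc₀0
      have : c₀ = -w₀ := by
        rw [eq_neg_iff_add_eq_zero, add_comm]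
        exact hzero
      have hmem0 : c₀ ∈ C ⊓ W := ⟨hc₀C, by rw [this]; exact W.neg_mem hw₀⟩
      rw [hCW] at hmem0
      simpa using hmem0
  · -- V ⊓ C ≠ ⊥, use essentiality of TC in C
    have h1 : (V ⊓ C) ⊓ TC ≠ ⊥ := hTCess (V ⊓ C) inf_le_right hVC
    obtain ⟨z, hz, hz0⟩ := Submodule.exists_mem_ne_zero_of_ne_bot h1
    exact ⟨z, ⟨hz.1.1, Submodule.mem_sup_right hz.2⟩, hz0⟩

end Essential

section Topo

variable {A : Type u} [CommRing A] {M : Type v} [AddCommGroup M] [Module A M]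

lemma isolated_extract {N : Submodule A M} (h : IsIsolatedSubmodule A M N) :
    ∃ E : Finset M, ∀ P : Submodule A M, (∀ e ∈ E, (e ∈ P ↔ e ∈ N)) → P = N := by
  classical
  rw [IsIsolatedSubmodule, submoduleTopology, isOpen_induced_iff] at h
  obtain ⟨U, hU, hpre⟩ := h
  have hNU : (fun m => (decide (m ∈ N) : Bool)) ∈ U := by
    have : N ∈ (fun (P : Submodule A M) (m : M) => (decide (m ∈ P) : Bool)) ⁻¹' U := by
      rw [hpre]; rfl
    exact this
  rw [isOpen_pi_iff] at hU
  obtain ⟨E, uu, huu, hsub⟩ := hU _ hNU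
  refine ⟨E, fun P hP => ?_⟩
  have hmem : (fun m => (decide (m ∈ P) : Bool)) ∈ U := by
    apply hsub
    intro e he
    have heq : (decide (e ∈ P) : Bool) = (decide (e ∈ N) : Bool) := decide_eq_decide.mpr (hP e he)
    show (decide (e ∈ P) : Bool) ∈ uu e
    rw [heq]
    exact (huu e he).2
  have : P ∈ (fun (P : Submodule A M) (m : M) => (decide (m ∈ P) : Bool)) ⁻¹' U := hmem
  rw [hpre] at this
  exact this

lemma isolated_of_finsets {N : Submodule A M} (F G : Finset M)
    (hchar : ∀ P : Submodule A M, ((∀ f ∈ F, f ∈ P) ∧ (∀ g ∈ G, g ∉ P)) ↔ P = N) :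
    IsIsolatedSubmodule A M N := by
  classical
  rw [IsIsolatedSubmodule, submoduleTopology, isOpen_induced_iff]
  refine ⟨(⋂ f ∈ F, {φ : M → Bool | φ f = true}) ∩ ⋂ g ∈ G, {φ : M → Bool | φ g = false},
    ?_, ?_⟩
  · have hopen : ∀ (m : M) (b : Bool), IsOpen {φ : M → Bool | φ m = b} := by
      intro m b
      have heq : {φ : M → Bool | φ m = b} = (fun φ : M → Bool => φ m) ⁻¹' {b} := rfl
      rw [heq]
      exact Continuous.isOpen_preimage (continuous_apply m) _ (isOpen_discrete _)
    apply IsOpen.inter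
    · exact isOpen_biInter_finset (fun f _ => hopen f true)
    · exact isOpen_biInter_finset (fun g _ => hopen g false)
  · ext P
    simp only [Set.mem_preimage, Set.mem_inter_iff, Set.mem_iInter, Set.mem_setOf_eq,
      Set.mem_singleton_iff, decide_eq_true_eq, decide_eq_false_iff_not]
    exact hchar P

end Topo

set_option maxHeartbeats 1000000 in
/-- Let `A` be a noetherian commutative ring and `M` an `A`-module, and endow `Sub(M)` with
the topology induced from `2^M`.  (1) If `N` is an isolated point of `Sub(M)` then `N` is
finitely generated and `M/N` is artinian; in particular if `Sub(M)` has an isolated point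
then `M` is minimax.  (2) If every simple `A`-module is finite, then conversely `N` is
isolated iff `N` is finitely generated and `M/N` is artinian, and `Sub(M)` has an isolated
point iff `M` is minimax. -/
theorem isolated_submodule_iff
    (A : Type u) [CommRing A] [IsNoetherianRing A]
    (M : Type v) [AddCommGroup M] [Module A M] :
    (∀ N : Submodule A M, IsIsolatedSubmodule A M N →
        N.FG ∧ IsArtinian A (M ⧸ N)) ∧
    ((∃ N : Submodule A M, IsIsolatedSubmodule A M N) →
        ∃ N : Submodule A M, N.FG ∧ IsArtinian A (M ⧸ N)) ∧
    ((∀ (S : Type u) [AddCommGroup S] [Module A S], IsSimpleModule A S → Finite S) →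
      (∀ N : Submodule A M, IsIsolatedSubmodule A M N ↔
          N.FG ∧ IsArtinian A (M ⧸ N)) ∧
      ((∃ N : Submodule A M, IsIsolatedSubmodule A M N) ↔
          ∃ N : Submodule A M, N.FG ∧ IsArtinian A (M ⧸ N))) := by
  classical
  have part1 : ∀ N : Submodule A M, IsIsolatedSubmodule A M N →
      N.FG ∧ IsArtinian A (M ⧸ N) := by
    intro N hN
    obtain ⟨E, hE⟩ := isolated_extract hN
    constructor
    · refine ⟨E.filter (fun e => e ∈ N), ?_⟩
      apply hE
      intro e he
      constructor
      · intro hesp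
        have hle : Submodule.span A ↑(E.filter (fun e => e ∈ N)) ≤ N := by
          rw [Submodule.span_le]
          intro z hz
          simp only [Finset.coe_filter, Set.mem_setOf_eq] at hz
          exact hz.2
        exact hle hesp
      · intro heN
        apply Submodule.subset_span
        simp only [Finset.coe_filter, Set.mem_setOf_eq]
        exact ⟨he, heN⟩
    · set H : Finset (M ⧸ N) := (E.filter (fun e => e ∉ N)).image (Submodule.Quotient.mk)
        with hH
      refine artinian_of_finite_cover (M ⧸ N) H ?_ ?_
      · intro h0
        simp only [hH, Finset.mem_image, Finset.mem_filter] at h0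
        obtain ⟨e, ⟨heE, heN⟩, hmk⟩ := h0
        exact heN ((Submodule.Quotient.mk_eq_zero N).mp hmk)
      · intro Pb hPb
        set P := Submodule.comap N.mkQ Pb with hP
        have hNP : N ≤ P := by
          intro x hx
          show N.mkQ x ∈ Pb
          have hx0 : N.mkQ x = 0 := by
            rw [Submodule.mkQ_apply, Submodule.Quotient.mk_eq_zero]; exact hx
          rw [hx0]; exact Pb.zero_mem
        have hPneq : P ≠ N := by
          intro hPN
          apply hPb
          rw [eq_bot_iff]
          intro z hz
          obtain ⟨y, rfl⟩ := Submodule.Quotient.mk_surjective N z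
          have hyP : y ∈ P := hz
          rw [hPN] at hyP
          rw [Submodule.mem_bot, Submodule.Quotient.mk_eq_zero]
          exact hyP
        have hnot : ¬ (∀ e ∈ E, (e ∈ P ↔ e ∈ N)) := fun hcon => hPneq (hE P hcon)
        push_neg at hnot
        obtain ⟨e, heE, hne⟩ := hnot
        obtain ⟨heP, heN⟩ : e ∈ P ∧ e ∉ N := by
          rcases hne with h | ⟨h1, h2⟩
          · exact h
          · exact absurd (hNP h2) h1
        refine ⟨Submodule.Quotient.mk e, ?_, heP⟩
        simp only [hH, Finset.mem_image, Finset.mem_filter]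
        exact ⟨e, ⟨heE, heN⟩, rfl⟩
  have part2 : (∀ (S : Type u) [AddCommGroup S] [Module A S], IsSimpleModule A S → Finite S) →
      ∀ N : Submodule A M, N.FG → IsArtinian A (M ⧸ N) → IsIsolatedSubmodule A M N := by
    intro hfin N hFG hart
    obtain ⟨F, hF⟩ := hFG
    haveI := hart
    obtain ⟨T, hTfin, hTess⟩ := exists_finite_essential A (Q := M ⧸ N) hfin
    have hTset : (↑T : Set (M ⧸ N)).Finite := Set.finite_coe_iff.mp hTfin
    set S0 : Set (M ⧸ N) := {q | q ∈ T ∧ q ≠ 0} with hS0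
    have hS0fin : S0.Finite := hTset.subset (fun q hq => hq.1)
    set G : Finset M := hS0fin.toFinset.image
      (fun q => Classical.choose (Submodule.Quotient.mk_surjective N q)) with hG
    apply isolated_of_finsets F G
    intro P
    constructor
    · rintro ⟨hFP, hGP⟩
      have hNP : N ≤ P := by
        rw [← hF, Submodule.span_le]
        intro z hz
        exact hFP z hz
      by_contra hPN
      have hnle : ¬ P ≤ N := fun hle => hPN (le_antisymm hle hNP)
      have hmapP : Submodule.map N.mkQ P ≠ ⊥ := by
        obtain ⟨y, hyP, hyN⟩ := SetLike.not_le_iff_exists.mp hnle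
        rw [Submodule.ne_bot_iff]
        refine ⟨N.mkQ y, Submodule.mem_map_of_mem hyP, ?_⟩
        rw [Submodule.mkQ_apply, Ne, Submodule.Quotient.mk_eq_zero]
        exact hyN
      have h2 := hTess _ hmapP
      obtain ⟨u, ⟨humap, huT⟩, hu0⟩ := Submodule.exists_mem_ne_zero_of_ne_bot h2
      obtain ⟨p', hp', hp'eq⟩ := humap
      have huS0 : u ∈ S0 := ⟨huT, hu0⟩
      have hgspec : Submodule.Quotient.mk
          (Classical.choose (Submodule.Quotient.mk_surjective N u)) = u :=
        Classical.choose_spec (Submodule.Quotient.mk_surjective N u)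
      have hgG : Classical.choose (Submodule.Quotient.mk_surjective N u) ∈ G :=
        Finset.mem_image.mpr ⟨u, hS0fin.mem_toFinset.mpr huS0, rfl⟩
      have hgP : Classical.choose (Submodule.Quotient.mk_surjective N u) ∈ P := by
        have hdiff : Classical.choose (Submodule.Quotient.mk_surjective N u) - p' ∈ N := by
          rw [← Submodule.Quotient.eq]
          rw [hgspec]
          exact hp'eq.symm
        have := P.add_mem (hNP hdiff) hp'
        simpa using this
      exact (hGP _ hgG) hgP
    · intro hPN
      constructor
      · intro f hf
        rw [hPN, ← hF]
        exact Submodule.subset_span hf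
      · intro g hgG hgN
        rw [hPN] at hgN
        obtain ⟨u, huS0, hgu⟩ := Finset.mem_image.mp hgG
        have huS0' : u ∈ S0 := hS0fin.mem_toFinset.mp huS0
        have hgspec : Submodule.Quotient.mk
            (Classical.choose (Submodule.Quotient.mk_surjective N u)) = u :=
          Classical.choose_spec (Submodule.Quotient.mk_surjective N u)
        rw [hgu] at hgspec
        apply huS0'.2
        rw [← hgspec]
        exact (Submodule.Quotient.mk_eq_zero N).mpr hgN
  refine ⟨part1, ?_, ?_⟩
  · rintro ⟨N, hN⟩
    exact ⟨N, part1 N hN⟩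
  · intro hfin
    refine ⟨fun N => ⟨part1 N, fun h => part2 hfin N h.1 h.2⟩, ?_, ?_⟩
    · rintro ⟨N, hN⟩
      exact ⟨N, part1 N hN⟩
    · rintro ⟨N, hfg, hart⟩
      exact ⟨N, part2 hfin N hfg hart⟩
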